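/- Let {λ_k^ρ} and {λ_k^σ} denote the eigenvalues of quantum states ρ and σ on a finite-dimensional Hilbert space, each listed in non-increasing order with multiplicity. Then Σ_k |λ_k^ρ − λ_k^σ| ≤ ‖ρ − σ‖₁ (Mirsky's inequality). -/

import Mathlib

open scoped ComplexOrder

/-- The trace norm `‖A‖₁ = Tr √(Aᴴ A)` of a complex matrix. -/
noncomputable def traceNorm {n : Type*} [Fintype n] [DecidableEq n] (A : Matrix n n ℂ) : ℝ :=
  ((Matrix.posSemidef_conjTranspose_mul_self A).isHermitian.eigenvectorUnitary.1 *
    Matrix.diagonal (((↑) : ℝ → ℂ) ∘ (Real.sqrt ·) ∘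
      (Matrix.posSemidef_conjTranspose_mul_self A).isHermitian.eigenvalues) *
    (star (Matrix.posSemidef_conjTranspose_mul_self A).isHermitian.eigenvectorUnitary :
      Matrix n n ℂ)).trace.re

namespace MirskyAux

open Matrix Finset Module

variable {d : ℕ}

lemma rayleigh_eq {A : Matrix (Fin d) (Fin d) ℂ} (hA : A.IsHermitian)
    (x : EuclideanSpace ℂ (Fin d)) :
    RCLike.re (inner ℂ x (Matrix.toEuclideanLin A x) : ℂ) =
      ∑ j, hA.eigenvalues j * ‖(inner ℂ (hA.eigenvectorBasis j) x : ℂ)‖ ^ 2 := by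
  have hsym := (Matrix.isHermitian_iff_isSymmetric).1 hA
  have key : ∀ j, (inner ℂ (hA.eigenvectorBasis j) (Matrix.toEuclideanLin A x) : ℂ)
      = (hA.eigenvalues j : ℂ) * inner ℂ (hA.eigenvectorBasis j) x := by
    intro j
    rw [← hsym (hA.eigenvectorBasis j) x]
    have : Matrix.toEuclideanLin A (hA.eigenvectorBasis j)
        = (hA.eigenvalues j : ℝ) • (hA.eigenvectorBasis j) := by
      apply (WithLp.equiv 2 _).injective
      ext i
      simpa [Matrix.toEuclideanLin_apply] using congrFun (hA.mulVec_eigenvectorBasis j) i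
    rw [this, RCLike.real_smul_eq_coe_smul (K := ℂ), inner_smul_left]
    simp
  rw [← (hA.eigenvectorBasis).sum_inner_mul_inner x (Matrix.toEuclideanLin A x), map_sum]
  congr 1
  ext j
  rw [key j, ← inner_conj_symm x (hA.eigenvectorBasis j), mul_comm ((hA.eigenvalues j : ℂ)),
    ← mul_assoc, RCLike.conj_mul]
  simp [RCLike.mul_re, ← Complex.ofReal_pow]
  ring

lemma sum_norm_inner (b : OrthonormalBasis (Fin d) ℂ (EuclideanSpace ℂ (Fin d)))
    (x : EuclideanSpace ℂ (Fin d)) : ∑ j, ‖(inner ℂ (b j) x : ℂ)‖ ^ 2 = ‖x‖ ^ 2 := by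
  have h := b.sum_inner_mul_inner x x
  have h2 : ∀ j, (inner ℂ x (b j) : ℂ) * inner ℂ (b j) x
      = ((‖(inner ℂ (b j) x : ℂ)‖ ^ 2 : ℝ) : ℂ) := by
    intro j
    rw [← inner_conj_symm x (b j), RCLike.conj_mul]
    norm_cast
  rw [← inner_self_eq_norm_sq (𝕜 := ℂ) x, ← h, map_sum]
  refine Finset.sum_congr rfl fun j _ => ?_
  rw [h2 j]
  exact (RCLike.ofReal_re _).symm

lemma inner_eq_zero_of_mem_span {E : Type*} [NormedAddCommGroup E] [InnerProductSpace ℂ E]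
    {b : Fin d → E} (hb : Orthonormal ℂ b) (S : Finset (Fin d)) {x : E}
    (hx : x ∈ Submodule.span ℂ (b '' S)) {j : Fin d} (hj : j ∉ S) :
    (inner ℂ (b j) x : ℂ) = 0 := by
  induction hx using Submodule.span_induction with
  | mem y hy =>
    obtain ⟨i, hi, rfl⟩ := hy
    exact hb.2 (fun h => hj (h ▸ hi))
  | zero => exact inner_zero_right _
  | add y z _ _ hy hz => rw [inner_add_right, hy, hz, add_zero]
  | smul c y _ hy => rw [inner_smul_right, hy, mul_zero]

lemma span_finrank {A : Matrix (Fin d) (Fin d) ℂ} (hA : A.IsHermitian) (S : Finset (Fin d)) :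
    finrank ℂ (Submodule.span ℂ (hA.eigenvectorBasis '' (S : Set (Fin d)))) = S.card := by
  rw [Set.image_eq_range]
  rw [show (Set.range fun x : ↥(S : Set (Fin d)) => hA.eigenvectorBasis ↑x)
      = Set.range (hA.eigenvectorBasis ∘ (Subtype.val : ↥(S : Set (Fin d)) → Fin d)) from rfl]
  rw [finrank_span_eq_card ((hA.eigenvectorBasis.orthonormal.linearIndependent).comp
    (Subtype.val : ↥(S : Set (Fin d)) → Fin d) Subtype.val_injective)]
  simp

lemma exists_unit_common {A B : Matrix (Fin d) (Fin d) ℂ} (hA : A.IsHermitian)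
    (hB : B.IsHermitian) (SA SB : Finset (Fin d)) (hcard : d < SA.card + SB.card) :
    ∃ x : EuclideanSpace ℂ (Fin d), ‖x‖ = 1 ∧
      x ∈ Submodule.span ℂ (hA.eigenvectorBasis '' (SA : Set (Fin d))) ∧
      x ∈ Submodule.span ℂ (hB.eigenvectorBasis '' (SB : Set (Fin d))) := by
  set W := Submodule.span ℂ (hA.eigenvectorBasis '' (SA : Set (Fin d)))
  set V := Submodule.span ℂ (hB.eigenvectorBasis '' (SB : Set (Fin d)))
  have hW : finrank ℂ W = SA.card := span_finrank hA SA
  have hV : finrank ℂ V = SB.card := span_finrank hB SB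
  have hsum := Submodule.finrank_sup_add_finrank_inf_eq W V
  have hle : finrank ℂ (W ⊔ V : Submodule ℂ _) ≤ d := by
    simpa using Submodule.finrank_le (W ⊔ V)
  have hpos : 0 < finrank ℂ (W ⊓ V : Submodule ℂ _) := by omega
  have hbot : W ⊓ V ≠ ⊥ := by
    intro h
    rw [h] at hpos
    simp at hpos
  obtain ⟨x, hxmem, hx0⟩ := Submodule.exists_mem_ne_zero_of_ne_bot hbot
  refine ⟨(↑(‖x‖)⁻¹ : ℂ) • x, ?_, ?_, ?_⟩
  · rw [norm_smul]
    simp [norm_ne_zero_iff.2 hx0]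
  · exact Submodule.smul_mem _ _ hxmem.1
  · exact Submodule.smul_mem _ _ hxmem.2

/-- Rayleigh bound, lower version. -/
lemma rayleigh_ge {A : Matrix (Fin d) (Fin d) ℂ} (hA : A.IsHermitian) (S : Finset (Fin d))
    {x : EuclideanSpace ℂ (Fin d)} (hx : x ∈ Submodule.span ℂ (hA.eigenvectorBasis '' S))
    (hn : ‖x‖ = 1) {c : ℝ} (hc : ∀ j ∈ S, c ≤ hA.eigenvalues j) :
    c ≤ RCLike.re (inner ℂ x (Matrix.toEuclideanLin A x) : ℂ) := by
  rw [rayleigh_eq hA x]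
  have hzero : ∀ j ∉ S, ‖(inner ℂ (hA.eigenvectorBasis j) x : ℂ)‖ ^ 2 = 0 := fun j hj => by
    rw [inner_eq_zero_of_mem_span hA.eigenvectorBasis.orthonormal S hx hj]; simp
  have hsum : ∑ j ∈ S, ‖(inner ℂ (hA.eigenvectorBasis j) x : ℂ)‖ ^ 2 = 1 := by
    rw [Finset.sum_subset (Finset.subset_univ S) (fun j _ hj => hzero j hj),
      sum_norm_inner, hn, one_pow]
  calc c = ∑ j ∈ S, c * ‖(inner ℂ (hA.eigenvectorBasis j) x : ℂ)‖ ^ 2 := by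
        rw [← Finset.mul_sum, hsum, mul_one]
    _ ≤ ∑ j ∈ S, hA.eigenvalues j * ‖(inner ℂ (hA.eigenvectorBasis j) x : ℂ)‖ ^ 2 := by
        refine Finset.sum_le_sum fun j hj => ?_
        exact mul_le_mul_of_nonneg_right (hc j hj) (by positivity)
    _ = ∑ j, hA.eigenvalues j * ‖(inner ℂ (hA.eigenvectorBasis j) x : ℂ)‖ ^ 2 :=
        Finset.sum_subset (Finset.subset_univ S) fun j _ hj => by rw [hzero j hj, mul_zero]

/-- Rayleigh bound, upper version. -/
lemma rayleigh_le {A : Matrix (Fin d) (Fin d) ℂ} (hA : A.IsHermitian) (S : Finset (Fin d))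
    {x : EuclideanSpace ℂ (Fin d)} (hx : x ∈ Submodule.span ℂ (hA.eigenvectorBasis '' S))
    (hn : ‖x‖ = 1) {c : ℝ} (hc : ∀ j ∈ S, hA.eigenvalues j ≤ c) :
    RCLike.re (inner ℂ x (Matrix.toEuclideanLin A x) : ℂ) ≤ c := by
  rw [rayleigh_eq hA x]
  have hzero : ∀ j ∉ S, ‖(inner ℂ (hA.eigenvectorBasis j) x : ℂ)‖ ^ 2 = 0 := fun j hj => by
    rw [inner_eq_zero_of_mem_span hA.eigenvectorBasis.orthonormal S hx hj]; simp
  have hsum : ∑ j ∈ S, ‖(inner ℂ (hA.eigenvectorBasis j) x : ℂ)‖ ^ 2 = 1 := by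
    rw [Finset.sum_subset (Finset.subset_univ S) (fun j _ hj => hzero j hj),
      sum_norm_inner, hn, one_pow]
  calc ∑ j, hA.eigenvalues j * ‖(inner ℂ (hA.eigenvectorBasis j) x : ℂ)‖ ^ 2
      = ∑ j ∈ S, hA.eigenvalues j * ‖(inner ℂ (hA.eigenvectorBasis j) x : ℂ)‖ ^ 2 :=
        (Finset.sum_subset (Finset.subset_univ S) fun j _ hj => by
          rw [hzero j hj, mul_zero]).symm
    _ ≤ ∑ j ∈ S, c * ‖(inner ℂ (hA.eigenvectorBasis j) x : ℂ)‖ ^ 2 := by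
        refine Finset.sum_le_sum fun j hj => ?_
        exact mul_le_mul_of_nonneg_right (hc j hj) (by positivity)
    _ = c := by rw [← Finset.mul_sum, hsum, mul_one]

lemma quad_mono {A B : Matrix (Fin d) (Fin d) ℂ} (h : (B - A).PosSemidef)
    (x : EuclideanSpace ℂ (Fin d)) :
    RCLike.re (inner ℂ x (Matrix.toEuclideanLin A x) : ℂ) ≤
      RCLike.re (inner ℂ x (Matrix.toEuclideanLin B x) : ℂ) := by
  have h0 := h.dotProduct_mulVec_nonneg (WithLp.equiv 2 (Fin d → ℂ) x)
  have h1 : (0:ℝ) ≤ (dotProduct (star (WithLp.equiv 2 (Fin d → ℂ) x))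
      ((B - A) *ᵥ (WithLp.equiv 2 (Fin d → ℂ) x))).re := by
    simpa using (Complex.le_def.1 h0).1
  rw [EuclideanSpace.inner_eq_star_dotProduct, EuclideanSpace.inner_eq_star_dotProduct]
  simp only [Matrix.ofLp_toEuclideanLin_apply]
  rw [Matrix.sub_mulVec, dotProduct_sub, Complex.sub_re] at h1
  simpa [dotProduct_comm] using h1

/-- Weyl's monotonicity principle for sorted eigenvalues. -/
lemma weyl_mono {A B : Matrix (Fin d) (Fin d) ℂ} (hA : A.IsHermitian) (hB : B.IsHermitian)
    (hBA : (B - A).PosSemidef) {f g : Fin d → ℝ} (hf : Antitone f) (hg : Antitone g)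
    {ef eg : Equiv.Perm (Fin d)} (hef : f = hA.eigenvalues ∘ ef)
    (heg : g = hB.eigenvalues ∘ eg) (k : Fin d) : f k ≤ g k := by
  classical
  set SA : Finset (Fin d) := (Finset.Iic k).image ef with hSA
  set SB : Finset (Fin d) := (Finset.Ici k).image eg with hSB
  have hcard : d < SA.card + SB.card := by
    rw [hSA, hSB, Finset.card_image_of_injective _ ef.injective,
      Finset.card_image_of_injective _ eg.injective, Fin.card_Iic, Fin.card_Ici]
    have := k.isLt
    omega
  obtain ⟨x, hn, hxA, hxB⟩ := exists_unit_common hA hB SA SB hcard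
  have h1 : f k ≤ RCLike.re (inner ℂ x (Matrix.toEuclideanLin A x) : ℂ) := by
    refine rayleigh_ge hA SA hxA hn fun j hj => ?_
    obtain ⟨i, hi, rfl⟩ := Finset.mem_image.1 hj
    have : hA.eigenvalues (ef i) = f i := by rw [hef]; rfl
    rw [this]
    exact hf (Finset.mem_Iic.1 hi)
  have h2 : RCLike.re (inner ℂ x (Matrix.toEuclideanLin B x) : ℂ) ≤ g k := by
    refine rayleigh_le hB SB hxB hn fun j hj => ?_
    obtain ⟨i, hi, rfl⟩ := Finset.mem_image.1 hj
    have : hB.eigenvalues (eg i) = g i := by rw [heg]; rfl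
    rw [this]
    exact hg (Finset.mem_Ici.1 hi)
  have h3 := quad_mono hBA x
  linarith

section conj
variable {C : Matrix (Fin d) (Fin d) ℂ} (hC : C.IsHermitian)

/-- conjugation of a real diagonal by the eigenvector unitary -/
noncomputable def conjDiag (hC : C.IsHermitian) (v : Fin d → ℝ) : Matrix (Fin d) (Fin d) ℂ :=
  (hC.eigenvectorUnitary : Matrix (Fin d) (Fin d) ℂ) * diagonal (RCLike.ofReal ∘ v) *
    star (hC.eigenvectorUnitary : Matrix (Fin d) (Fin d) ℂ)

lemma conjDiag_posSemidef {v : Fin d → ℝ} (hv : ∀ i, 0 ≤ v i) : (conjDiag hC v).PosSemidef := by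
  refine (Matrix.posSemidef_diagonal_iff.mpr ?_).mul_mul_conjTranspose_same _
  intro i
  simpa using Complex.zero_le_real.2 (hv i)

lemma conjDiag_isHermitian (v : Fin d → ℝ) : (conjDiag hC v).IsHermitian := by
  unfold conjDiag Matrix.IsHermitian
  simp only [Matrix.star_eq_conjTranspose, conjTranspose_mul, conjTranspose_conjTranspose,
    diagonal_conjTranspose]
  rw [show star (RCLike.ofReal ∘ v : Fin d → ℂ) = RCLike.ofReal ∘ v by
    funext i; simp [Pi.star_apply, RCLike.star_def]]
  rw [mul_assoc]

lemma conjDiag_trace (v : Fin d → ℝ) : (conjDiag hC v).trace = ((∑ i, v i : ℝ) : ℂ) := by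
  unfold conjDiag
  rw [Matrix.trace_mul_cycle]
  rw [show star (hC.eigenvectorUnitary : Matrix (Fin d) (Fin d) ℂ) *
    (hC.eigenvectorUnitary : Matrix (Fin d) (Fin d) ℂ) = 1 from
      mem_unitaryGroup_iff'.mp hC.eigenvectorUnitary.2]
  rw [one_mul, trace_diagonal]
  push_cast
  rfl

lemma conjDiag_mul (v w : Fin d → ℝ) :
    conjDiag hC v * conjDiag hC w = conjDiag hC (v * w) := by
  unfold conjDiag
  rw [mul_assoc, mul_assoc, ← mul_assoc (star _) _, ← mul_assoc (star _)]
  rw [show star (hC.eigenvectorUnitary : Matrix (Fin d) (Fin d) ℂ) *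
    (hC.eigenvectorUnitary : Matrix (Fin d) (Fin d) ℂ) = 1 from
      mem_unitaryGroup_iff'.mp hC.eigenvectorUnitary.2]
  rw [one_mul, ← mul_assoc, ← mul_assoc, mul_assoc _ (diagonal _) (diagonal _),
    diagonal_mul_diagonal]
  rw [show (fun i => (RCLike.ofReal ∘ v) i * (RCLike.ofReal ∘ w) i : Fin d → ℂ)
      = RCLike.ofReal ∘ (v * w) by funext i; simp]

lemma conjDiag_sub (v w : Fin d → ℝ) :
    conjDiag hC v - conjDiag hC w = conjDiag hC (v - w) := by
  unfold conjDiag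
  rw [← sub_mul, ← mul_sub]
  have : diagonal (RCLike.ofReal ∘ (v - w) : Fin d → ℂ)
      = diagonal (RCLike.ofReal ∘ v) - diagonal (RCLike.ofReal ∘ w) := by
    have h2 : (RCLike.ofReal ∘ (v - w) : Fin d → ℂ)
        = fun i => (RCLike.ofReal ∘ v) i - (RCLike.ofReal ∘ w) i := by funext i; simp
    rw [diagonal_sub, h2]
  rw [this]

lemma conjDiag_eigenvalues : conjDiag hC hC.eigenvalues = C := (hC.spectral_theorem).symm

end conj

lemma traceNorm_hermitian {C : Matrix (Fin d) (Fin d) ℂ} (hC : C.IsHermitian) :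
    traceNorm C = ∑ i, |hC.eigenvalues i| := by
  set P := Matrix.posSemidef_conjTranspose_mul_self C
  have hT : P.isHermitian.eigenvectorUnitary.1 * Matrix.diagonal (((↑) : ℝ → ℂ) ∘ (Real.sqrt ·) ∘
      P.isHermitian.eigenvalues) * (star P.isHermitian.eigenvectorUnitary : Matrix (Fin d) (Fin d) ℂ)
      = cfc Real.sqrt (Cᴴ * C) := by
    rw [P.isHermitian.cfc_eq]; rfl
  have hCC : Cᴴ * C = cfc (· ^ 2 : ℝ → ℝ) C := by
    rw [cfc_pow_id C 2 hC.isSelfAdjoint, hC.eq, pow_two]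
  have habs : (Real.sqrt ∘ (· ^ 2 : ℝ → ℝ)) = abs := funext fun x => Real.sqrt_sq_eq_abs x
  unfold traceNorm
  rw [hT, hCC, ← cfc_comp Real.sqrt (· ^ 2 : ℝ → ℝ) C, habs, hC.cfc_eq]
  rw [show hC.cfc abs = conjDiag hC (fun i => |hC.eigenvalues i|) from rfl, conjDiag_trace]
  simp

lemma re_trace_eq_sum_eigenvalues {C : Matrix (Fin d) (Fin d) ℂ} (hC : C.IsHermitian) :
    C.trace.re = ∑ i, hC.eigenvalues i := by
  conv_lhs => rw [← conjDiag_eigenvalues hC]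
  rw [conjDiag_trace]
  simp

end MirskyAux

open MirskyAux Matrix in
/-- Mirsky's inequality: if `lρ` and `lσ` enumerate the eigenvalues of the states `ρ` and `σ`
(with multiplicity) in non-increasing order, then `∑ k |λ_k^ρ − λ_k^σ| ≤ ‖ρ − σ‖₁`. -/
theorem stmt_11 {d : ℕ} (ρ σ : Matrix (Fin d) (Fin d) ℂ)
    (hρ : ρ.PosSemidef) (hσ : σ.PosSemidef)
    (h1 : ρ.trace = 1) (h2 : σ.trace = 1)
    (lρ lσ : Fin d → ℝ) (hlρa : Antitone lρ) (hlσa : Antitone lσ)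
    (hlρ : ∃ e : Equiv.Perm (Fin d), lρ = hρ.isHermitian.eigenvalues ∘ e)
    (hlσ : ∃ e : Equiv.Perm (Fin d), lσ = hσ.isHermitian.eigenvalues ∘ e) :
    ∑ k, |lρ k - lσ k| ≤ traceNorm (ρ - σ) := by
  classical
  obtain ⟨eρ, hef⟩ := hlρ
  obtain ⟨eσ, heg⟩ := hlσ
  have hC : (ρ - σ).IsHermitian := hρ.isHermitian.sub hσ.isHermitian
  set lp : Fin d → ℝ := fun i => max (hC.eigenvalues i) 0 with hlp
  set lm : Fin d → ℝ := fun i => max (-hC.eigenvalues i) 0 with hlm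
  have hCp : (conjDiag hC lp).PosSemidef := conjDiag_posSemidef hC (fun i => le_max_right _ _)
  have hCm : (conjDiag hC lm).PosSemidef := conjDiag_posSemidef hC (fun i => le_max_right _ _)
  have hdiff : conjDiag hC lp - conjDiag hC lm = ρ - σ := by
    rw [conjDiag_sub]
    have : lp - lm = hC.eigenvalues := by
      funext i
      exact max_zero_sub_max_neg_zero_eq_self _
    rw [this, conjDiag_eigenvalues]
  set B := σ + conjDiag hC lp with hBdef
  have hB : B.IsHermitian := hσ.isHermitian.add (conjDiag_isHermitian hC lp)
  have hBσ : (B - σ).PosSemidef := by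
    rw [hBdef, add_sub_cancel_left]
    exact hCp
  have hBρ : (B - ρ).PosSemidef := by
    have h' := hdiff
    rw [sub_eq_iff_eq_add] at h'
    have : B - ρ = conjDiag hC lm := by
      rw [hBdef, h']
      abel
    rw [this]
    exact hCm
  set es := Tuple.sort (fun i => -hB.eigenvalues i) with hes
  set h : Fin d → ℝ := hB.eigenvalues ∘ es with hh
  have hmono := Tuple.monotone_sort (fun i => -hB.eigenvalues i)
  have hanti : Antitone h := by
    intro a b hab
    have := hmono hab
    simp only [Function.comp_apply] at this
    simpa [hh] using neg_le_neg_iff.mp this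
  have hfh : ∀ k, lρ k ≤ h k :=
    weyl_mono hρ.isHermitian hB hBρ hlρa hanti hef rfl
  have hgh : ∀ k, lσ k ≤ h k :=
    weyl_mono hσ.isHermitian hB hBσ hlσa hanti heg rfl
  have sum_h : ∑ k, h k = B.trace.re := by
    rw [re_trace_eq_sum_eigenvalues hB, hh]
    exact Equiv.sum_comp es hB.eigenvalues
  have sum_f : ∑ k, lρ k = ρ.trace.re := by
    rw [re_trace_eq_sum_eigenvalues hρ.isHermitian, hef]
    exact Equiv.sum_comp eρ hρ.isHermitian.eigenvalues
  have sum_g : ∑ k, lσ k = σ.trace.re := by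
    rw [re_trace_eq_sum_eigenvalues hσ.isHermitian, heg]
    exact Equiv.sum_comp eσ hσ.isHermitian.eigenvalues
  have traceB : B.trace.re = σ.trace.re + ∑ i, lp i := by
    rw [hBdef, trace_add, Complex.add_re, conjDiag_trace]
    simp
  have traceBρ : B.trace.re = ρ.trace.re + ∑ i, lm i := by
    have h' := hdiff
    rw [sub_eq_iff_eq_add] at h'
    have hBeq : B = ρ + conjDiag hC lm := by
      rw [hBdef, h']
      abel
    rw [hBeq, trace_add, Complex.add_re, conjDiag_trace]
    simp
  have key : ∀ k, |lρ k - lσ k| ≤ (h k - lσ k) + (h k - lρ k) := by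
    intro k
    have h1 := hfh k
    have h2 := hgh k
    rw [abs_sub_le_iff]
    constructor <;> linarith
  calc ∑ k, |lρ k - lσ k| ≤ ∑ k, ((h k - lσ k) + (h k - lρ k)) :=
        Finset.sum_le_sum fun k _ => key k
    _ = (∑ k, h k - ∑ k, lσ k) + (∑ k, h k - ∑ k, lρ k) := by
        rw [Finset.sum_add_distrib, Finset.sum_sub_distrib, Finset.sum_sub_distrib]
    _ = (∑ i, lp i) + (∑ i, lm i) := by
        rw [sum_h, sum_f, sum_g, traceB]
        have := traceBρ
        rw [traceB] at this
        linarith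
    _ = ∑ i, |hC.eigenvalues i| := by
        rw [← Finset.sum_add_distrib]
        refine Finset.sum_congr rfl fun i _ => ?_
        rcases le_total (hC.eigenvalues i) 0 with hx | hx
        · simp [hlp, hlm, max_eq_right hx, max_eq_left (neg_nonneg.2 hx), abs_of_nonpos hx]
        · simp [hlp, hlm, max_eq_left hx, max_eq_right (neg_nonpos.2 hx), abs_of_nonneg hx]
    _ = traceNorm (ρ - σ) := (traceNorm_hermitian hC).symm
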